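/- Let Y and Δ be positive semidefinite operators on a finite-dimensional complex Hilbert space with tr(Δ) < 1, and let π̃ be a density matrix with π̃ ≤ Y + Δ. Let T := Y^{1/2}·((Y+Δ)^{1/2})^{+}, where ((Y+Δ)^{1/2})^{+} denotes the Moore–Penrose pseudoinverse of (Y+Δ)^{1/2}, and set π := T·π̃·T† / tr[T†T·π̃]. Then π is a well-defined density matrix and ‖π̃ − π‖₁ ≤ √(8·tr(Δ)). -/

import Mathlib

open scoped BigOperators Kronecker ComplexOrder

noncomputable section

namespace EquivEnsembles

/-! ### Generic linear-algebraic notions -/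

variable {ι : Type*} [Fintype ι] [DecidableEq ι]

/-- The positive semidefinite square root, as `Matrix.PosSemidef.sqrt` was defined in
Mathlib of December 2024 (removed since). -/
def _root_.Matrix.PosSemidef.sqrt {A : Matrix ι ι ℂ} (hA : A.PosSemidef) : Matrix ι ι ℂ :=
  (hA.isHermitian.eigenvectorUnitary : Matrix ι ι ℂ) *
    Matrix.diagonal ((↑) ∘ Real.sqrt ∘ hA.isHermitian.eigenvalues) *
    (star hA.isHermitian.eigenvectorUnitary : Matrix ι ι ℂ)

/-- The operator norm of a matrix, via its action on Euclidean space. -/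
def opNorm (A : Matrix ι ι ℂ) : ℝ := ‖Matrix.toEuclideanCLM (𝕜 := ℂ) A‖

/-- The trace norm `‖A‖₁ = tr √(AᴴA)` of a matrix. -/
def traceNorm (A : Matrix ι ι ℂ) : ℝ :=
  ((Matrix.posSemidef_conjTranspose_mul_self A).sqrt).trace.re

/-- A density matrix: positive semidefinite with unit trace. -/
def IsDensity (ρ : Matrix ι ι ℂ) : Prop := ρ.PosSemidef ∧ ρ.trace = 1

/-- Functional calculus for (Hermitian) matrices, via the spectral theorem;
junk value `0` on non-Hermitian matrices. -/
def mfun (f : ℝ → ℝ) (A : Matrix ι ι ℂ) : Matrix ι ι ℂ :=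
  if h : A.IsHermitian then
    (h.eigenvectorUnitary : Matrix ι ι ℂ) *
      Matrix.diagonal (fun i => (f (h.eigenvalues i) : ℂ)) *
      (star h.eigenvectorUnitary : Matrix ι ι ℂ)
  else 0

/-- Matrix logarithm, base 2. -/
def mlog2 (A : Matrix ι ι ℂ) : Matrix ι ι ℂ := mfun (Real.logb 2) A

/-- Matrix logarithm, base e. -/
def mln (A : Matrix ι ι ℂ) : Matrix ι ι ℂ := mfun Real.log A

/-- Moore-Penrose pseudoinverse (of a Hermitian matrix; junk value `0` otherwise). -/
def hpinv (A : Matrix ι ι ℂ) : Matrix ι ι ℂ := mfun (fun x => x⁻¹) A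

/-- Quantum relative entropy `S(τ‖ρ) = tr (τ (log τ − log ρ))` (base-2 logarithms). -/
def relEnt (τ ρ : Matrix ι ι ℂ) : ℝ := (τ * (mlog2 τ - mlog2 ρ)).trace.re

/-- Von Neumann entropy (base-2 logarithm). -/
def vnEnt (τ : Matrix ι ι ℂ) : ℝ := -(τ * mlog2 τ).trace.re

/-- Von Neumann entropy (natural logarithm). -/
def vnEntNat (τ : Matrix ι ι ℂ) : ℝ := -(τ * mln τ).trace.re

/-- Max-relative entropy `S_max(τ‖ρ) = min {λ : τ ≤ 2^λ ρ}`. -/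
def smax (τ ρ : Matrix ι ι ℂ) : ℝ :=
  sInf {lam : ℝ | (((2:ℝ) ^ lam) • ρ - τ).PosSemidef}

/-- The Gibbs state `e^{-H/T}/Z(T)` of a Hamiltonian `H` at temperature `T`. -/
def gibbs (H : Matrix ι ι ℂ) (T : ℝ) : Matrix ι ι ℂ :=
  ((NormedSpace.exp ((-(T : ℂ))⁻¹ • H)).trace)⁻¹ • NormedSpace.exp ((-(T : ℂ))⁻¹ • H)

/-- The partition function `Z(T) = tr e^{-H/T}`. -/
def partZ (H : Matrix ι ι ℂ) (T : ℝ) : ℂ := (NormedSpace.exp ((-(T : ℂ))⁻¹ • H)).trace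

/-- Energy density `u(T)` (with `N` sites). -/
def uT (H : Matrix ι ι ℂ) (T : ℝ) (N : ℕ) : ℝ := (H * gibbs H T).trace.re / N

/-- Specific heat capacity `c(T)` (with `N` sites). -/
def cT (H : Matrix ι ι ℂ) (T : ℝ) (N : ℕ) : ℝ :=
  ((H * H * gibbs H T).trace.re - ((H * gibbs H T).trace.re) ^ 2) / (N * T ^ 2)

/-- Entropy density `s(T)` (with `N` sites, natural logarithm). -/
def sT (H : Matrix ι ι ℂ) (T : ℝ) (N : ℕ) : ℝ := vnEntNat (gibbs H T) / N

/-- The rank-one spectral projection `|ν⟩⟨ν|` onto the `ν`-th eigenvector of a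
Hermitian matrix. -/
def eigProj {A : Matrix ι ι ℂ} (hA : A.IsHermitian) (ν : ι) : Matrix ι ι ℂ :=
  (hA.eigenvectorUnitary : Matrix ι ι ℂ) * Matrix.single ν ν 1 *
    (star hA.eigenvectorUnitary : Matrix ι ι ℂ)

/-- The microcanonical index set `M_{e,δ} = {ν : |E_ν − eN| ≤ δ√N}`. -/
def microSet {A : Matrix ι ι ℂ} (hA : A.IsHermitian) (e δ : ℝ) (N : ℕ) : Finset ι :=
  Finset.univ.filter fun ν => |hA.eigenvalues ν - e * N| ≤ δ * Real.sqrt N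

/-- The microcanonical state `τ_{e,δ}`. -/
def microState {A : Matrix ι ι ℂ} (hA : A.IsHermitian) (e δ : ℝ) (N : ℕ) : Matrix ι ι ℂ :=
  (((microSet hA e δ N).card : ℂ))⁻¹ • ∑ ν ∈ microSet hA e δ N, eigProj hA ν

/-- The restricted partition function `Z(T,e,δ) = Σ_{ν ∈ M_{e,δ}} e^{−E_ν/T}`. -/
def partZmicro {A : Matrix ι ι ℂ} (hA : A.IsHermitian) (T e δ : ℝ) (N : ℕ) : ℝ :=
  ∑ ν ∈ microSet hA e δ N, Real.exp (-(hA.eigenvalues ν) / T)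

/-- `τ` is supported on the span of the eigenvectors indexed by `M`. -/
def SupportedOn {A : Matrix ι ι ℂ} (hA : A.IsHermitian) (M : Finset ι)
    (τ : Matrix ι ι ℂ) : Prop :=
  (∑ ν ∈ M, eigProj hA ν) * τ * (∑ ν ∈ M, eigProj hA ν) = τ


/-! ### Many-body systems on a set `V` of sites -/

variable {V : Type*} [Fintype V] [DecidableEq V] {D : ℕ}

/-- Basis configurations of `⊗_{v ∈ V} ℂ^D`. -/
abbrev Cfg (V : Type*) (D : ℕ) := V → Fin D

/-- Basis configurations on a region `X ⊆ V`. -/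
abbrev CfgOn (D : ℕ) {V : Type*} (X : Finset V) := {x : V // x ∈ X} → Fin D

/-- Splitting a configuration into its parts on `X` and on the complement of `X`. -/
def cfgSplit (D : ℕ) (X : Finset V) :
    Cfg V D ≃ ({x : V // x ∈ X} → Fin D) × ({x : V // ¬ x ∈ X} → Fin D) :=
  Equiv.piEquivPiSubtypeProd (fun x => x ∈ X) fun _ => Fin D

/-- The reduced state `ρ_X = tr_{V∖X} ρ` on the region `X`. -/
def reduce (X : Finset V) (ρ : Matrix (Cfg V D) (Cfg V D) ℂ) :
    Matrix (CfgOn D X) (CfgOn D X) ℂ := fun a b =>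
  ∑ h : {x : V // ¬ x ∈ X} → Fin D,
    ρ ((cfgSplit D X).symm (a, h)) ((cfgSplit D X).symm (b, h))

/-- The embedding `P ↦ P ⊗ 𝟙` of an operator on region `X` into the full system. -/
def embed (X : Finset V) (P : Matrix (CfgOn D X) (CfgOn D X) ℂ) :
    Matrix (Cfg V D) (Cfg V D) ℂ :=
  Matrix.submatrix (P ⊗ₖ (1 : Matrix ({x : V // ¬ x ∈ X} → Fin D) ({x : V // ¬ x ∈ X} → Fin D) ℂ))
    (cfgSplit D X) (cfgSplit D X)

/-- An operator acts only on the region `X` if it is of the form `P ⊗ 𝟙`. -/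
def ActsOn (A : Matrix (Cfg V D) (Cfg V D) ℂ) (X : Finset V) : Prop :=
  ∃ P, A = embed X P

/-- The correlation
`cor_ρ(X,Y) = max |tr((P⊗Q)(ρ_{XY} − ρ_X ⊗ ρ_Y))|` over `‖P‖,‖Q‖ ≤ 1` supported on
`X` resp. `Y`; expressed via operators embedded in the full system (for disjoint
`X`, `Y`, `tr((P⊗Q)ρ_{XY}) = tr(P̂ Q̂ ρ)` and `tr((P⊗Q)(ρ_X⊗ρ_Y)) = tr(P̂ρ) tr(Q̂ρ)`). -/
def corr (ρ : Matrix (Cfg V D) (Cfg V D) ℂ) (X Y : Finset V) : ℝ :=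
  sSup {r : ℝ | ∃ (P : Matrix (CfgOn D X) (CfgOn D X) ℂ) (Q : Matrix (CfgOn D Y) (CfgOn D Y) ℂ),
    opNorm P ≤ 1 ∧ opNorm Q ≤ 1 ∧
    r = ‖(embed X P * embed Y Q * ρ).trace -
          (embed X P * ρ).trace * (embed Y Q * ρ).trace‖}

/-- The product state `⊗_{v ∈ V} ρ_v` of single-site states. -/
def prodState (ρs : V → Matrix (Fin D) (Fin D) ℂ) : Matrix (Cfg V D) (Cfg V D) ℂ :=
  fun f g => ∏ v, ρs v (f v) (g v)

/-- The single-site reduced state `ρ_{\{v\}}` as a `D×D` matrix. -/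
def reduce1 (v : V) (ρ : Matrix (Cfg V D) (Cfg V D) ℂ) : Matrix (Fin D) (Fin D) ℂ :=
  fun a b => ∑ h : {x : V // x ≠ v} → Fin D,
    ρ (fun x => if hx : x = v then a else h ⟨x, hx⟩)
      (fun x => if hx : x = v then b else h ⟨x, hx⟩)

/-- The tensor product `⊗_j ρ_j` of states on pairwise disjoint regions `C j`,
as a state on the union of the regions. -/
def tensorOver {M : ℕ} (C : Fin M → Finset V)
    (ρs : ∀ j, Matrix (CfgOn D (C j)) (CfgOn D (C j)) ℂ) :
    Matrix (CfgOn D (Finset.univ.biUnion C)) (CfgOn D (Finset.univ.biUnion C)) ℂ :=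
  fun f g => ∏ j, ρs j
    (fun x => f ⟨x.1, Finset.mem_biUnion.mpr ⟨j, Finset.mem_univ j, x.2⟩⟩)
    (fun x => g ⟨x.1, Finset.mem_biUnion.mpr ⟨j, Finset.mem_univ j, x.2⟩⟩)


/-! ### The lattice `Λ = {1,…,n}^d` -/

/-- A site of the lattice `Λ = {1,…,n}^d`. -/
abbrev Site (d n : ℕ) := Fin d → Fin n

/-- Manhattan distance between two lattice sites. -/
def siteDist {d n : ℕ} (x y : Site d n) : ℕ := ∑ a, ((x a : ℤ) - (y a : ℤ)).natAbs

/-- Distance between two regions of the lattice. -/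
def setDist {d n : ℕ} (X Y : Finset (Site d n)) : ℕ :=
  sInf {m | ∃ x ∈ X, ∃ y ∈ Y, siteDist x y = m}

/-- The ball of radius `k` around site `i` (in Manhattan distance). -/
def ball {d n : ℕ} (i : Site d n) (k : ℕ) : Finset (Site d n) :=
  Finset.univ.filter fun j => siteDist i j ≤ k

/-- The hypercube with edge length `l` and corner `c`. -/
def cube {d n : ℕ} (l : ℕ) (c : Fin d → Fin (n - l + 1)) : Finset (Site d n) :=
  Finset.univ.filter fun x => ∀ a, (c a : ℕ) ≤ (x a : ℕ) ∧ (x a : ℕ) < (c a : ℕ) + l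

/-- The uniform average over all hypercubes of edge length `l` contained in the lattice. -/
def cubeAvg {d n : ℕ} (l : ℕ) (f : Finset (Site d n) → ℝ) : ℝ :=
  (∑ c : Fin d → Fin (n - l + 1), f (cube l c)) / ((n - l + 1) ^ d : ℕ)


/-- The nonnegative real branch of the Lambert `W` function: for `x ≥ 0`,
`W x` is the unique `w ≥ 0` with `w e^w = x`. -/
def lambertW (x : ℝ) : ℝ := sSup {w : ℝ | 0 ≤ w ∧ w * Real.exp w ≤ x}

/-- The quantity `Δ_{k,ξ,z,T}` (with `C` the dimension-dependent constant, `c = c(T)`). -/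
def DeltaBE (C : ℝ) (d k : ℕ) (ξ z T c : ℝ) (N : ℕ) : ℝ :=
  C * (max (k : ℝ) ξ * (z + 1)) ^ (2 * d) / Real.sqrt (T ^ 2 * c) *
    max (1 / (max (k : ℝ) ξ * (z + 1) * Real.log N)) (1 / (T ^ 2 * c))


/-! ### Local Hamiltonians and decaying correlations on the lattice -/

variable {d n D : ℕ}

/-- The state `ρ` has `(ξ,z)`-exponentially decaying correlations. -/
def HasDecay (ρ : Matrix (Cfg (Site d n) D) (Cfg (Site d n) D) ℂ) (ξ z : ℝ) : Prop :=
  ∀ X Y : Finset (Site d n), 0 < setDist X Y →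
    corr ρ X Y ≤ ((n ^ d : ℕ) : ℝ) ^ z * Real.exp (-(setDist X Y : ℝ) / ξ)

/-- The family `Hloc` of local terms is a `k`-local Hamiltonian: each term has norm
at most one and acts only on sites at distance at most `k` from its center. -/
def IsKLocal (Hloc : Site d n → Matrix (Cfg (Site d n) D) (Cfg (Site d n) D) ℂ)
    (k : ℕ) : Prop :=
  ∀ i, opNorm (Hloc i) ≤ 1 ∧ ActsOn (Hloc i) (ball i k)


/-! ### Miscellaneous -/

/-- Reduction of a state on a dependent tensor product `⊗_j H_{A_j}` to the `j`-th factor. -/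
def reduceAt {M : ℕ} {ι : Fin M → Type*} [∀ j, Fintype (ι j)] [∀ j, DecidableEq (ι j)]
    (j : Fin M) (π : Matrix (∀ i, ι i) (∀ i, ι i) ℂ) : Matrix (ι j) (ι j) ℂ :=
  fun a b => ∑ f : ∀ i, ι i, ∑ g : ∀ i, ι i,
    if f j = a ∧ g j = b ∧ ∀ i, i ≠ j → f i = g i then π f g else 0

/-- The tensor product `ρ₁ ⊗ ⋯ ⊗ ρ_M` on a dependent tensor product `⊗_j H_{A_j}`. -/
def prodDep {M : ℕ} {ι : Fin M → Type*} [∀ j, Fintype (ι j)] [∀ j, DecidableEq (ι j)]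
    (ρs : ∀ j, Matrix (ι j) (ι j) ℂ) : Matrix (∀ i, ι i) (∀ i, ι i) ℂ :=
  fun f g => ∏ j, ρs j (f j) (g j)

/-- The pure state `|ψ⟩⟨ψ|` where `ψ = Σ_{ν ∈ M} c_ν |ν⟩` is the vector of the span of
the eigenvectors `{|ν⟩ : ν ∈ M}` with coordinate vector `c`. -/
def pureFromCoords {ι : Type*} [Fintype ι] [DecidableEq ι] {A : Matrix ι ι ℂ}
    (hA : A.IsHermitian) (M : Finset ι) (c : EuclideanSpace ℂ {ν // ν ∈ M}) :
    Matrix ι ι ℂ :=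
  Matrix.vecMulVec
    (fun x => ∑ ν : {ν // ν ∈ M}, c ν * (hA.eigenvectorUnitary : Matrix ι ι ℂ) x ν.1)
    (fun y => starRingEnd ℂ
      (∑ ν : {ν // ν ∈ M}, c ν * (hA.eigenvectorUnitary : Matrix ι ι ℂ) y ν.1))



/-! ### API for the frozen `Matrix.PosSemidef.sqrt` -/

section SqrtAPI
open scoped MatrixOrder

lemma _root_.Matrix.PosSemidef.sqrt_eq_cfcSqrt {ι : Type*} [Fintype ι] [DecidableEq ι]
    {A : Matrix ι ι ℂ} (hA : A.PosSemidef) : hA.sqrt = CFC.sqrt A := by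
  rw [CFC.sqrt_eq_real_sqrt A hA.nonneg, cfcₙ_eq_cfc, hA.isHermitian.cfc_eq, Matrix.IsHermitian.cfc,
    Unitary.conjStarAlgAut_apply, Matrix.PosSemidef.sqrt]
  rfl

lemma _root_.Matrix.PosSemidef.posSemidef_sqrt {ι : Type*} [Fintype ι] [DecidableEq ι]
    {A : Matrix ι ι ℂ} (hA : A.PosSemidef) : hA.sqrt.PosSemidef := by
  rw [hA.sqrt_eq_cfcSqrt]
  exact Matrix.nonneg_iff_posSemidef.mp (CFC.sqrt_nonneg A)

lemma _root_.Matrix.PosSemidef.sqrt_mul_self {ι : Type*} [Fintype ι] [DecidableEq ι]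
    {A : Matrix ι ι ℂ} (hA : A.PosSemidef) : hA.sqrt * hA.sqrt = A := by
  rw [hA.sqrt_eq_cfcSqrt]
  exact CFC.sqrt_mul_sqrt_self A hA.nonneg

lemma _root_.Matrix.PosSemidef.eq_sqrt_of_sq_eq {ι : Type*} [Fintype ι] [DecidableEq ι]
    {A B : Matrix ι ι ℂ} (hA : A.PosSemidef) (hB : B.PosSemidef) (hAB : A ^ 2 = B) :
    A = hB.sqrt := by
  rw [hB.sqrt_eq_cfcSqrt]
  exact (CFC.sqrt_unique (by rw [← pow_two, hAB]) hA.nonneg).symm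

end SqrtAPI


/-! ### Auxiliary lemmas for statement_13 -/

section AuxStatement13
open Matrix
variable {ι : Type*} [Fintype ι] [DecidableEq ι]
variable {A B : Matrix ι ι ℂ}

private lemma coe_star_eig (hA : A.IsHermitian) :
    (star hA.eigenvectorUnitary : Matrix ι ι ℂ) = (hA.eigenvectorUnitary : Matrix ι ι ℂ)ᴴ := by
  rw [← Matrix.star_eq_conjTranspose]

private lemma eigU_conj_mul (hA : A.IsHermitian) :
    (hA.eigenvectorUnitary : Matrix ι ι ℂ)ᴴ * (hA.eigenvectorUnitary : Matrix ι ι ℂ) = 1 := by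
  rw [← Matrix.star_eq_conjTranspose]
  exact Unitary.coe_star_mul_self hA.eigenvectorUnitary

private lemma eigU_mul_conj (hA : A.IsHermitian) :
    (hA.eigenvectorUnitary : Matrix ι ι ℂ) * (hA.eigenvectorUnitary : Matrix ι ι ℂ)ᴴ = 1 := by
  rw [← Matrix.star_eq_conjTranspose]
  exact Unitary.coe_mul_star_self hA.eigenvectorUnitary

private lemma mfun_eq (f : ℝ → ℝ) (hA : A.IsHermitian) :
    mfun f A = (hA.eigenvectorUnitary : Matrix ι ι ℂ) *
      Matrix.diagonal (fun i => (f (hA.eigenvalues i) : ℂ)) *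
      (hA.eigenvectorUnitary : Matrix ι ι ℂ)ᴴ := by
  rw [mfun, dif_pos hA, coe_star_eig]

private lemma mfun_isHermitian (f : ℝ → ℝ) (hA : A.IsHermitian) : (mfun f A).IsHermitian := by
  rw [mfun_eq f hA]
  simp only [Matrix.IsHermitian, conjTranspose_mul, conjTranspose_conjTranspose,
    Matrix.diagonal_conjTranspose]
  simp [Matrix.mul_assoc, Pi.star_def]

private lemma mfun_mul_mfun (f g : ℝ → ℝ) (hA : A.IsHermitian) :
    mfun f A * mfun g A = mfun (fun x => f x * g x) A := by
  rw [mfun_eq f hA, mfun_eq g hA, mfun_eq _ hA]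
  simp only [Matrix.mul_assoc]
  rw [← Matrix.mul_assoc ((hA.eigenvectorUnitary : Matrix ι ι ℂ)ᴴ), eigU_conj_mul hA,
    Matrix.one_mul, ← Matrix.mul_assoc (Matrix.diagonal _), Matrix.diagonal_mul_diagonal]
  push_cast
  rfl

private lemma mfun_congr {f g : ℝ → ℝ} (hA : A.IsHermitian) (h : ∀ x, f x = g x) :
    mfun f A = mfun g A := by
  rw [mfun_eq f hA, mfun_eq g hA]
  congr 1
  ext i j
  simp [h]

private lemma mfun_id (hA : A.IsHermitian) : mfun (fun x => x) A = A := by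
  rw [mfun_eq _ hA, ← coe_star_eig hA]
  convert hA.spectral_theorem.symm using 3
  rw [Unitary.conjStarAlgAut_apply]
  rfl

private lemma mfun_id' {f : ℝ → ℝ} (hA : A.IsHermitian) (h : ∀ x, f x = x) :
    mfun f A = A := by
  rw [mfun_congr hA h, mfun_id hA]

private lemma mfun_one (hA : A.IsHermitian) : mfun (fun _ => 1) A = 1 := by
  rw [mfun_eq _ hA]
  simp only [Complex.ofReal_one, Matrix.diagonal_one, Matrix.mul_one]
  exact eigU_mul_conj hA

private lemma mfun_trace (f : ℝ → ℝ) (hA : A.IsHermitian) :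
    (mfun f A).trace = ((∑ i, f (hA.eigenvalues i) : ℝ) : ℂ) := by
  rw [mfun_eq f hA, Matrix.trace_mul_cycle, eigU_conj_mul hA,
    Matrix.one_mul, Matrix.trace_diagonal]
  push_cast
  rfl

private lemma mfun_posSemidef (f : ℝ → ℝ) (hA : A.IsHermitian)
    (hf : ∀ i, 0 ≤ f (hA.eigenvalues i)) : (mfun f A).PosSemidef := by
  rw [mfun_eq f hA]
  exact (Matrix.PosSemidef.diagonal (fun i => by
    simpa using Complex.zero_le_real.mpr (hf i))).mul_mul_conjTranspose_same _

private lemma mfun_sub (f g : ℝ → ℝ) (hA : A.IsHermitian) :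
    mfun f A - mfun g A = mfun (fun x => f x - g x) A := by
  rw [mfun_eq f hA, mfun_eq g hA, mfun_eq _ hA, ← Matrix.sub_mul, ← Matrix.mul_sub,
    Matrix.diagonal_sub]
  push_cast
  rfl

private lemma herm_trace_ofReal (hA : A.IsHermitian) : A.trace = (A.trace.re : ℂ) := by
  have h := Matrix.trace_conjTranspose A
  rw [hA.eq] at h
  exact (Complex.conj_eq_iff_re.mp h.symm ▸ rfl)

private lemma psd_trace_re_nonneg (hA : A.PosSemidef) : 0 ≤ A.trace.re := by
  have h : ∀ i, 0 ≤ (A i i).re := by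
    intro i
    have := hA.re_dotProduct_nonneg (Pi.single i 1)
    simpa [dotProduct, Matrix.mulVec, Pi.single_apply, Finset.sum_ite_eq] using this
  calc (0:ℝ) ≤ ∑ i, (A i i).re := Finset.sum_nonneg fun i _ => h i
    _ = A.trace.re := by simp [Matrix.trace, Matrix.diag, Complex.re_sum]

private lemma frob_sum (X : Matrix ι ι ℂ) :
    (Xᴴ*X).trace.re = ∑ p : ι × ι, Complex.normSq (X p.1 p.2) := by
  simp only [Matrix.trace, Matrix.mul_apply, Matrix.conjTranspose_apply, Matrix.diag,
    Fintype.sum_prod_type]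
  rw [Complex.re_sum]
  rw [Finset.sum_comm]
  congr 1; ext i
  rw [Complex.re_sum]
  congr 1; ext j
  have hs : star (X j i) = (starRingEnd ℂ) (X j i) := rfl
  rw [hs, ← Complex.normSq_eq_conj_mul_self]
  simp

private lemma psd_trace_zero_iff (hA : A.PosSemidef) (h : A.trace.re = 0) : A = 0 := by
  obtain ⟨B, rfl⟩ : ∃ B : Matrix ι ι ℂ, A = Bᴴ * B :=
    ⟨hA.sqrt, by rw [hA.posSemidef_sqrt.isHermitian.eq, hA.sqrt_mul_self]⟩
  rw [frob_sum] at h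
  have h2 : ∀ p ∈ Finset.univ, Complex.normSq (B (Prod.fst p) (Prod.snd p)) = 0 :=
    fun p _ => Finset.sum_eq_zero_iff_of_nonneg
      (fun q _ => Complex.normSq_nonneg _) |>.mp h p (Finset.mem_univ p)
  have hB : B = 0 := by
    ext i j
    simpa [Complex.normSq_eq_zero] using h2 (i, j) (Finset.mem_univ _)
  simp [hB]

private lemma cs_trace (B C : Matrix ι ι ℂ) :
    ‖(B*C).trace‖ ≤ Real.sqrt ((Bᴴ*B).trace.re) * Real.sqrt ((Cᴴ*C).trace.re) := by
  let u : EuclideanSpace ℂ (ι × ι) := WithLp.toLp 2 fun p => (starRingEnd ℂ) (B p.1 p.2)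
  let v : EuclideanSpace ℂ (ι × ι) := WithLp.toLp 2 fun p => C p.2 p.1
  have h1 : inner ℂ u v = (B*C).trace := by
    simp only [PiLp.inner_apply, RCLike.inner_apply, Matrix.trace, Matrix.mul_apply, Matrix.diag,
      Fintype.sum_prod_type, u, v]
    simp [starRingEnd_self_apply, mul_comm]
  have h2 : ‖u‖ = Real.sqrt ((Bᴴ*B).trace.re) := by
    rw [EuclideanSpace.norm_eq, frob_sum]
    congr 1
    refine Finset.sum_congr rfl fun p _ => ?_
    simp [u, Complex.sq_norm, Complex.normSq_conj]
  have h3 : ‖v‖ = Real.sqrt ((Cᴴ*C).trace.re) := by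
    rw [EuclideanSpace.norm_eq, frob_sum]
    rw [← Equiv.sum_comp (Equiv.prodComm ι ι)]
    congr 1
    refine Finset.sum_congr rfl fun p _ => ?_
    simp [v, Complex.sq_norm]
  calc ‖(B*C).trace‖ = ‖inner ℂ u v‖ := by rw [h1]
    _ ≤ ‖u‖ * ‖v‖ := norm_inner_le_norm u v
    _ = _ := by rw [h2, h3]

private lemma trace_mul_psd_eq (hA : A.PosSemidef) (B : Matrix ι ι ℂ) :
    (A * B).trace = (hA.sqrt * B * hA.sqrt).trace := by
  conv_lhs => rw [← hA.sqrt_mul_self]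
  rw [Matrix.mul_assoc, Matrix.trace_mul_comm]

private lemma psd_sandwich_herm (hB : B.PosSemidef) (hA : A.IsHermitian) :
    (A * B * A).PosSemidef := by
  have := hB.mul_mul_conjTranspose_same A
  rwa [hA.eq] at this

private lemma trace_mul_psd_psd_re_nonneg (hA : A.PosSemidef) (hB : B.PosSemidef) :
    0 ≤ (A * B).trace.re := by
  rw [trace_mul_psd_eq hA B]
  exact psd_trace_re_nonneg (psd_sandwich_herm hB hA.posSemidef_sqrt.isHermitian)

private lemma trace_mul_psd_psd_ofReal (hA : A.PosSemidef) (hB : B.PosSemidef) :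
    (A * B).trace = ((A * B).trace.re : ℂ) := by
  have h1 : ((A*B).trace) = (hA.sqrt * B * hA.sqrt).trace := trace_mul_psd_eq hA B
  have h2 := herm_trace_ofReal (psd_sandwich_herm hB hA.posSemidef_sqrt.isHermitian).isHermitian
  rw [h1, h2]
  simp

private lemma psd_dotProduct_real (hA : A.PosSemidef) (v : ι → ℂ) :
    star v ⬝ᵥ A *ᵥ v = ((star v ⬝ᵥ A *ᵥ v).re : ℂ) := by
  have h := hA.dotProduct_mulVec_nonneg v
  rw [Complex.nonneg_iff] at h
  exact Complex.ext rfl (by simpa using h.2.symm)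

private lemma sqrt_sub_sqrt_posSemidef {Y S : Matrix ι ι ℂ} (hY : Y.PosSemidef)
    (hS : S.PosSemidef) (h : (S - Y).PosSemidef) : (hS.sqrt - hY.sqrt).PosSemidef := by
  set D := hS.sqrt - hY.sqrt with hDdef
  have hD : D.IsHermitian := hS.posSemidef_sqrt.isHermitian.sub hY.posSemidef_sqrt.isHermitian
  refine hD.posSemidef_iff_eigenvalues_nonneg.mpr fun i => ?_
  by_contra hneg
  push_neg at hneg
  rw [Pi.zero_apply] at hneg
  set lam := hD.eigenvalues i with hlam
  set v : ι → ℂ := ⇑(hD.eigenvectorBasis i) with hv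
  have hvD : D *ᵥ v = (lam : ℂ) • v := by
    have h2 := hD.mulVec_eigenvectorBasis i
    rw [← hv, ← hlam] at h2
    rw [h2]
    ext x
    simp [Complex.real_smul]
  have hdecomp : S - Y = hS.sqrt * D + D * hY.sqrt := by
    rw [hDdef]
    rw [Matrix.mul_sub, Matrix.sub_mul, hS.sqrt_mul_self, hY.sqrt_mul_self]
    abel
  have hq : 0 ≤ ((star v) ⬝ᵥ (S - Y) *ᵥ v).re := h.re_dotProduct_nonneg v
  have h1 : (star v) ⬝ᵥ (hS.sqrt * D) *ᵥ v = (lam:ℂ) * ((star v) ⬝ᵥ hS.sqrt *ᵥ v) := by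
    rw [← Matrix.mulVec_mulVec, hvD, Matrix.mulVec_smul, dotProduct_smul]
    rfl
  have h2 : (star v) ⬝ᵥ (D * hY.sqrt) *ᵥ v = (lam:ℂ) * ((star v) ⬝ᵥ hY.sqrt *ᵥ v) := by
    rw [← Matrix.mulVec_mulVec, Matrix.dotProduct_mulVec]
    have hstar : star v ᵥ* D = star (D *ᵥ v) := by rw [Matrix.star_mulVec, hD.eq]
    rw [hstar, hvD, star_smul, smul_dotProduct]
    simp [Complex.conj_ofReal, smul_eq_mul]
  have hqS := psd_dotProduct_real hS.posSemidef_sqrt v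
  have hqY := psd_dotProduct_real hY.posSemidef_sqrt v
  have hqSre := hS.posSemidef_sqrt.re_dotProduct_nonneg v
  have hqYre := hY.posSemidef_sqrt.re_dotProduct_nonneg v
  set qS := ((star v) ⬝ᵥ hS.sqrt *ᵥ v).re
  set qY := ((star v) ⬝ᵥ hY.sqrt *ᵥ v).re
  have hsum : ((star v) ⬝ᵥ (S - Y) *ᵥ v).re = lam * (qS + qY) := by
    rw [hdecomp, Matrix.add_mulVec, dotProduct_add, h1, h2, hqS, hqY,
      ← Complex.ofReal_mul, ← Complex.ofReal_mul, ← Complex.ofReal_add, Complex.ofReal_re]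
    ring
  rw [hsum] at hq
  have hqSre' : 0 ≤ qS := by simpa using hqSre
  have hqYre' : 0 ≤ qY := by simpa using hqYre
  have hsum0 : qS + qY ≤ 0 := by
    by_contra hc
    push_neg at hc
    nlinarith
  have hzero : qS = 0 ∧ qY = 0 := ⟨by linarith, by linarith⟩
  have hSv : hS.sqrt *ᵥ v = 0 := by
    rw [← hS.posSemidef_sqrt.dotProduct_mulVec_zero_iff v, hqS, hzero.1]
    simp
  have hYv : hY.sqrt *ᵥ v = 0 := by
    rw [← hY.posSemidef_sqrt.dotProduct_mulVec_zero_iff v, hqY, hzero.2]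
    simp
  have hDv : D *ᵥ v = 0 := by
    rw [hDdef, Matrix.sub_mulVec, hSv, hYv, sub_zero]
  rw [hvD] at hDv
  have hvne : v ≠ 0 := by
    have h3 := hD.eigenvectorBasis.orthonormal.ne_zero i
    intro hc
    apply h3
    ext x
    exact congrFun hc x
  rw [smul_eq_zero] at hDv
  rcases hDv with h' | h'
  · exact absurd (by exact_mod_cast h' : lam = 0) (ne_of_lt hneg)
  · exact hvne h'

private lemma psd_smul_real {r : ℝ} (hr : 0 ≤ r) (hA : A.PosSemidef) :
    ((r:ℂ) • A).PosSemidef := by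
  refine Matrix.PosSemidef.of_dotProduct_mulVec_nonneg ?_ ?_
  · unfold Matrix.IsHermitian
    rw [Matrix.conjTranspose_smul, hA.1.eq]
    congr 1
    simp [Complex.conj_ofReal]
  · intro x
    rw [Matrix.smul_mulVec, dotProduct_smul]
    have h := hA.dotProduct_mulVec_nonneg x
    rw [smul_eq_mul]
    exact mul_nonneg (by exact_mod_cast Complex.zero_le_real.mpr hr) h

private lemma isometry_conj {W K : Matrix ι ι ℂ} (hW : Wᴴ * W = 1) :
    (W*K)ᴴ*(W*K) = Kᴴ*K := by
  rw [Matrix.conjTranspose_mul]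
  calc Kᴴ*Wᴴ*(W*K) = Kᴴ*((Wᴴ*W)*K) := by simp only [Matrix.mul_assoc]
    _ = Kᴴ*K := by rw [hW, Matrix.one_mul]

private lemma herm_prod_trace {X G : Matrix ι ι ℂ} (hX : X.IsHermitian) (hG : G.IsHermitian) :
    ((X*G)ᴴ*(X*G)).trace = (X * (G*G) * X).trace := by
  calc ((X*G)ᴴ*(X*G)).trace = ((G*X)*(X*G)).trace := by
        rw [Matrix.conjTranspose_mul, hX.eq, hG.eq]
    _ = ((X*G)*(G*X)).trace := Matrix.trace_mul_comm _ _
    _ = (X*(G*G)*X).trace := by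
        congr 1
        simp only [Matrix.mul_assoc]

private lemma numeric_main {e : ℝ} (he0 : 0 ≤ e) (heh : e ≤ 1/2) :
    2 * Real.sqrt e + e ≤ Real.sqrt (8*e) := by
  have hs := Real.sqrt_nonneg e
  have hs2 : Real.sqrt e ^ 2 = e := Real.sq_sqrt he0
  have h8 : Real.sqrt (8*e) = Real.sqrt 8 * Real.sqrt e := Real.sqrt_mul (by norm_num) e
  have hhalf : Real.sqrt (1/2) ^ 2 = 1/2 := Real.sq_sqrt (by norm_num)
  have hhalfnn : 0 ≤ Real.sqrt (1/2) := Real.sqrt_nonneg _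
  have hshalf : Real.sqrt e ≤ Real.sqrt (1/2) := Real.sqrt_le_sqrt heh
  have hb : 2 + Real.sqrt (1/2) ≤ Real.sqrt 8 := by
    have h1 : (2 + Real.sqrt (1/2))^2 ≤ 8 := by
      nlinarith [sq_nonneg (Real.sqrt (1/2) - 3/4)]
    calc 2 + Real.sqrt (1/2) = Real.sqrt ((2 + Real.sqrt (1/2))^2) :=
          (Real.sqrt_sq (by positivity)).symm
      _ ≤ Real.sqrt 8 := Real.sqrt_le_sqrt h1
  have hss : Real.sqrt e * Real.sqrt e ≤ Real.sqrt (1/2) * Real.sqrt e :=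
    mul_le_mul_of_nonneg_right hshalf hs
  have hbs : (2 + Real.sqrt (1/2)) * Real.sqrt e ≤ Real.sqrt 8 * Real.sqrt e :=
    mul_le_mul_of_nonneg_right hb hs
  rw [h8]
  nlinarith [hss, hbs, hs2]

private lemma numeric_triv {e : ℝ} (heh : 1/2 < e) : (2:ℝ) ≤ Real.sqrt (8*e) := by
  have hs := Real.sqrt_nonneg (8*e)
  have hs2 := Real.sq_sqrt (show (0:ℝ) ≤ 8*e by linarith)
  nlinarith

end AuxStatement13

open scoped Matrix

/-- second part of the proof of Lemma 5: the renormalized conjugated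
state `π = T π̃ T† / tr(T†T π̃)` is a density matrix close to `π̃` in trace norm. -/
theorem statement_13 {ι : Type*} [Fintype ι] [DecidableEq ι]
    (Y Δ πt : Matrix ι ι ℂ) (hY : Y.PosSemidef) (hΔ : Δ.PosSemidef)
    (hπt : IsDensity πt) (hle : (Y + Δ - πt).PosSemidef)
    (hΔ1 : Δ.trace.re < 1)
    (T π : Matrix ι ι ℂ) (hT : T = hY.sqrt * hpinv (hY.add hΔ).sqrt)
    (hπ : π = ((Tᴴ * T * πt).trace)⁻¹ • (T * πt * Tᴴ)) :
    IsDensity π ∧ traceNorm (πt - π) ≤ Real.sqrt (8 * Δ.trace.re) := by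
  obtain ⟨hπtP, hπtr⟩ := hπt
  set ε := Δ.trace.re with hεdef
  have hε0 : 0 ≤ ε := psd_trace_re_nonneg hΔ
  set R := (hY.add hΔ).sqrt with hRdef
  have hRpsd : R.PosSemidef := (hY.add hΔ).posSemidef_sqrt
  have hRH : R.IsHermitian := hRpsd.isHermitian
  have hRR : R * R = Y + Δ := (hY.add hΔ).sqrt_mul_self
  set Ys := hY.sqrt with hYsdef
  have hYspsd : Ys.PosSemidef := hY.posSemidef_sqrt
  have hYsH := hYspsd.isHermitian
  have hYsYs : Ys * Ys = Y := hY.sqrt_mul_self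
  set Ri := hpinv R with hRidef
  have hRi_eq : Ri = mfun (fun x => x⁻¹) R := rfl
  have hRiH : Ri.IsHermitian := by rw [hRi_eq]; exact mfun_isHermitian _ hRH
  -- the support projection
  set Pm := mfun (fun x => x⁻¹ * x) R with hPmdef
  have hPmH : Pm.IsHermitian := mfun_isHermitian _ hRH
  have hRiR : Ri * R = Pm := by
    have h := mfun_mul_mfun (fun x => x⁻¹) (fun x => x) hRH
    rw [mfun_id hRH] at h
    exact h
  have hRRi : R * Ri = Pm := by
    have h := mfun_mul_mfun (fun x => x) (fun x => x⁻¹) hRH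
    rw [mfun_id hRH] at h
    refine h.trans (mfun_congr hRH fun x => mul_comm x x⁻¹)
  have hPmR : Pm * R = R := by
    have h := mfun_mul_mfun (fun x => x⁻¹ * x) (fun x => x) hRH
    rw [mfun_id hRH] at h
    refine h.trans (mfun_id' hRH fun x => ?_)
    rcases eq_or_ne x 0 with h0 | h0
    · simp [h0]
    · field_simp
  have hPmPm : Pm * Pm = Pm := by
    have h := mfun_mul_mfun (fun x => x⁻¹ * x) (fun x => x⁻¹ * x) hRH
    refine h.trans (mfun_congr hRH fun x => ?_)
    rcases eq_or_ne x 0 with h0 | h0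
    · simp [h0]
    · field_simp
  have hPm_psd : Pm.PosSemidef := by
    refine mfun_posSemidef _ hRH fun i => ?_
    rcases eq_or_ne (hRH.eigenvalues i) 0 with h0 | h0
    · simp [h0]
    · rw [inv_mul_cancel₀ h0]; norm_num
  have h1mPm : ((1 : Matrix ι ι ℂ) - Pm).PosSemidef := by
    rw [← mfun_one hRH, hPmdef, mfun_sub _ _ hRH]
    refine mfun_posSemidef _ hRH fun i => ?_
    rcases eq_or_ne (hRH.eigenvalues i) 0 with h0 | h0
    · simp [h0]
    · rw [inv_mul_cancel₀ h0]; norm_num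
  have h1mPmH : ((1 : Matrix ι ι ℂ) - Pm).IsHermitian := Matrix.isHermitian_one.sub hPmH
  -- support of πt is inside range of Pm
  have hPπt : Pm * πt = πt := by
    have hQpsd : (((1:Matrix ι ι ℂ) - Pm) * πt * ((1:Matrix ι ι ℂ) - Pm)).PosSemidef :=
      psd_sandwich_herm hπtP h1mPmH
    have h1mPsq : ((1:Matrix ι ι ℂ) - Pm) * ((1:Matrix ι ι ℂ) - Pm) = (1:Matrix ι ι ℂ) - Pm := by
      rw [Matrix.mul_sub, Matrix.sub_mul, Matrix.sub_mul, hPmPm]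
      simp
    have htr0 : (((1:Matrix ι ι ℂ) - Pm) * πt).trace.re = 0 := by
      have hge : 0 ≤ (((1:Matrix ι ι ℂ) - Pm) * πt).trace.re :=
        trace_mul_psd_psd_re_nonneg h1mPm hπtP
      have hle0 : 0 ≤ (((1:Matrix ι ι ℂ) - Pm) * (Y + Δ - πt)).trace.re :=
        trace_mul_psd_psd_re_nonneg h1mPm hle
      have hsplit : (((1:Matrix ι ι ℂ) - Pm) * (Y + Δ)).trace =
          (((1:Matrix ι ι ℂ) - Pm) * (Y + Δ - πt)).trace + (((1:Matrix ι ι ℂ) - Pm) * πt).trace := by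
        rw [← Matrix.trace_add, ← Matrix.mul_add, sub_add_cancel]
      have hPS0 : (((1:Matrix ι ι ℂ) - Pm) * (Y + Δ)).trace = 0 := by
        rw [← hRR, ← Matrix.mul_assoc, Matrix.sub_mul, Matrix.one_mul, hPmR, sub_self,
          Matrix.zero_mul, Matrix.trace_zero]
      have hre := congrArg Complex.re hsplit
      rw [hPS0, Complex.add_re] at hre
      simp only [Complex.zero_re] at hre
      linarith
    have hQtr : (((1:Matrix ι ι ℂ) - Pm) * πt * ((1:Matrix ι ι ℂ) - Pm)).trace.re = 0 := by
      rw [Matrix.trace_mul_cycle, h1mPsq]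
      exact htr0
    have hQ0 : ((1:Matrix ι ι ℂ) - Pm) * πt * ((1:Matrix ι ι ℂ) - Pm) = 0 :=
      psd_trace_zero_iff hQpsd hQtr
    have hM : (((1:Matrix ι ι ℂ)-Pm) * hπtP.sqrt) * (((1:Matrix ι ι ℂ)-Pm) * hπtP.sqrt)ᴴ =
        ((1:Matrix ι ι ℂ) - Pm) * πt * ((1:Matrix ι ι ℂ) - Pm) := by
      rw [Matrix.conjTranspose_mul, hπtP.posSemidef_sqrt.isHermitian.eq, h1mPmH.eq]
      calc ((1:Matrix ι ι ℂ)-Pm) * hπtP.sqrt * (hπtP.sqrt * ((1:Matrix ι ι ℂ)-Pm))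
          = ((1:Matrix ι ι ℂ)-Pm) * (hπtP.sqrt * hπtP.sqrt) * ((1:Matrix ι ι ℂ)-Pm) := by
            simp only [Matrix.mul_assoc]
        _ = _ := by rw [hπtP.sqrt_mul_self]
    have hMz : ((1:Matrix ι ι ℂ)-Pm) * hπtP.sqrt = 0 := by
      have h0 := hM.trans hQ0
      have h2 : (((1:Matrix ι ι ℂ)-Pm) * hπtP.sqrt)ᴴᴴ * (((1:Matrix ι ι ℂ)-Pm) * hπtP.sqrt)ᴴ = 0 := by
        rwa [Matrix.conjTranspose_conjTranspose]
      have h3 := Matrix.conjTranspose_mul_self_eq_zero.mp h2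
      rw [← Matrix.conjTranspose_conjTranspose (((1:Matrix ι ι ℂ)-Pm) * hπtP.sqrt), h3]
      simp
    have hfin : ((1:Matrix ι ι ℂ) - Pm) * πt = 0 := by
      have h4 : ((1:Matrix ι ι ℂ)-Pm) * πt = (((1:Matrix ι ι ℂ)-Pm) * hπtP.sqrt) * hπtP.sqrt := by
        rw [Matrix.mul_assoc, hπtP.sqrt_mul_self]
      rw [h4, hMz, Matrix.zero_mul]
    have h5 : πt - Pm * πt = 0 := by
      rw [← hfin, Matrix.sub_mul, Matrix.one_mul]
    rw [sub_eq_zero] at h5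
    exact h5.symm
  have hπtPm : πt * Pm = πt := by
    have h := congrArg Matrix.conjTranspose hPπt
    rwa [Matrix.conjTranspose_mul, hPmH.eq, hπtP.isHermitian.eq] at h
  -- the A matrix
  set Am := Ri * πt * Ri with hAmdef
  have hAmpsd : Am.PosSemidef := psd_sandwich_herm hπtP hRiH
  have hRAmR : R * Am * R = πt := by
    calc R * (Ri * πt * Ri) * R = (R * Ri) * πt * (Ri * R) := by simp only [Matrix.mul_assoc]
      _ = πt := by rw [hRRi, hRiR, hPπt, hπtPm]
  have hRiSRi : Ri * (Y + Δ) * Ri = Pm := by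
    rw [← hRR]
    calc Ri * (R * R) * Ri = (Ri * R) * (R * Ri) := by simp only [Matrix.mul_assoc]
      _ = Pm := by rw [hRiR, hRRi, hPmPm]
  have h1mAm : ((1:Matrix ι ι ℂ) - Am).PosSemidef := by
    have h1 : Pm - Am = Ri * (Y + Δ - πt) * Ri := by
      rw [Matrix.mul_sub, Matrix.sub_mul, hRiSRi, hAmdef]
    have h2 : (Pm - Am).PosSemidef := h1 ▸ psd_sandwich_herm hle hRiH
    have h3 : (1:Matrix ι ι ℂ) - Am = ((1:Matrix ι ι ℂ) - Pm) + (Pm - Am) := by abel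
    rw [h3]; exact h1mPm.add h2
  set G := hAmpsd.sqrt with hGdef
  have hGH := hAmpsd.posSemidef_sqrt.isHermitian
  have hGG : G * G = Am := hAmpsd.sqrt_mul_self
  -- T-related computations
  have hTT : Tᴴ * T = Ri * Y * Ri := by
    rw [hT, Matrix.conjTranspose_mul, hRiH.eq, hYsH.eq, ← hYsYs]
    simp only [Matrix.mul_assoc]
  have hc_eq : (Tᴴ * T * πt).trace = (Y * Am).trace := by
    rw [hTT]
    have e1 : Ri * Y * Ri * πt = Ri * (Y * (Ri * πt)) := by simp only [Matrix.mul_assoc]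
    rw [e1, Matrix.trace_mul_comm, hAmdef]
    simp only [Matrix.mul_assoc]
  set cr := (Y * Am).trace.re with hcrdef
  have hcreal : (Y * Am).trace = (cr : ℂ) := trace_mul_psd_psd_ofReal hY hAmpsd
  set dr := (Δ * Am).trace.re with hdrdef
  have hdreal : (Δ * Am).trace = (dr:ℂ) := trace_mul_psd_psd_ofReal hΔ hAmpsd
  have hdr0 : 0 ≤ dr := trace_mul_psd_psd_re_nonneg hΔ hAmpsd
  have hSAm1 : ((Y + Δ) * Am).trace = 1 := by
    rw [← hRR]
    calc (R*R*Am).trace = (R*(R*Am)).trace := by rw [Matrix.mul_assoc]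
      _ = ((R*Am)*R).trace := Matrix.trace_mul_comm _ _
      _ = πt.trace := by rw [Matrix.mul_assoc, ← Matrix.mul_assoc R Am R, hRAmR]
      _ = 1 := hπtr
  have hsum1 : cr + dr = 1 := by
    have h1 : ((Y + Δ) * Am).trace = (Y*Am).trace + (Δ*Am).trace := by
      rw [Matrix.add_mul, Matrix.trace_add]
    rw [hSAm1, hcreal, hdreal] at h1
    exact_mod_cast h1.symm
  have hdrε : dr ≤ ε := by
    have h1 : 0 ≤ (Δ * ((1:Matrix ι ι ℂ) - Am)).trace.re := trace_mul_psd_psd_re_nonneg hΔ h1mAm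
    have h2 : (Δ * ((1:Matrix ι ι ℂ) - Am)).trace = Δ.trace - (Δ*Am).trace := by
      rw [Matrix.mul_sub, Matrix.mul_one, Matrix.trace_sub]
    have h3 := congrArg Complex.re h2
    rw [Complex.sub_re] at h3
    rw [h3] at h1
    simp only [hdrdef] at h1 ⊢
    linarith
  have hcr_pos : 0 < cr := by linarith
  have hcr1 : cr ≤ 1 := by linarith
  -- π is a density matrix
  have hσ : T * πt * Tᴴ = Ys * Am * Ys := by
    rw [hT, Matrix.conjTranspose_mul, hRiH.eq, hYsH.eq, hAmdef]
    simp only [Matrix.mul_assoc]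
  have hσpsd : (T * πt * Tᴴ).PosSemidef := hπtP.mul_mul_conjTranspose_same T
  have hσtr : (T * πt * Tᴴ).trace = (cr:ℂ) := by
    calc (T*πt*Tᴴ).trace = (Tᴴ*(T*πt)).trace := (Matrix.trace_mul_comm _ _)
      _ = (Tᴴ*T*πt).trace := by rw [← Matrix.mul_assoc]
      _ = (cr:ℂ) := by rw [hc_eq, hcreal]
  have hcinv : ((Tᴴ*T*πt).trace)⁻¹ = ((cr⁻¹ : ℝ) : ℂ) := by
    rw [hc_eq, hcreal, Complex.ofReal_inv]
  have hπdef : π = ((cr⁻¹:ℝ):ℂ) • (T * πt * Tᴴ) := by rw [hπ, hcinv]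
  have hπpsd : π.PosSemidef := by
    rw [hπdef]
    exact psd_smul_real (by positivity) hσpsd
  have hπtr1 : π.trace = 1 := by
    rw [hπdef, Matrix.trace_smul, hσtr, smul_eq_mul, ← Complex.ofReal_mul,
      inv_mul_cancel₀ (ne_of_gt hcr_pos)]
    simp
  refine ⟨⟨hπpsd, hπtr1⟩, ?_⟩
  -- the trace norm bound
  have hπH : π.IsHermitian := hπpsd.isHermitian
  set H := πt - π with hHdef
  have hHH : H.IsHermitian := hπtP.isHermitian.sub hπH
  set sgn : ℝ → ℝ := fun x => if x < 0 then -1 else 1 with hsgn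
  set W := mfun sgn H with hWdef
  have hWHerm : W.IsHermitian := mfun_isHermitian _ hHH
  have hWW : W * W = 1 := by
    rw [hWdef, mfun_mul_mfun sgn sgn hHH, ← mfun_one hHH]
    refine mfun_congr hHH fun x => ?_
    rcases lt_or_ge x 0 with h0 | h0 <;> simp [hsgn, h0, not_lt.mpr]
  have hWWconj : Wᴴ * W = 1 := by rw [hWHerm.eq, hWW]
  have habs : W * H = mfun (fun x => |x|) H := by
    have h := mfun_mul_mfun sgn (fun x => x) hHH
    rw [mfun_id hHH] at h
    rw [hWdef, h]
    refine mfun_congr hHH fun x => ?_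
    rcases lt_or_ge x 0 with h0 | h0
    · simp [hsgn, h0, abs_of_neg h0]
    · simp [hsgn, not_lt.mpr h0, abs_of_nonneg h0]
  have htn : traceNorm (πt - π) = ((W * H).trace).re := by
    have hsq : (mfun (fun x => |x|) H).PosSemidef := mfun_posSemidef _ hHH fun i => abs_nonneg _
    have hsqeq : mfun (fun x => |x|) H ^ 2 = Hᴴ * H := by
      rw [pow_two, mfun_mul_mfun _ _ hHH, hHH.eq]
      have h2 : H * H = mfun (fun x => x * x) H := by
        have h := mfun_mul_mfun (fun x => x) (fun x => x) hHH
        rwa [mfun_id hHH] at h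
      rw [h2]
      exact mfun_congr hHH fun x => abs_mul_abs_self x
    have heq := Matrix.PosSemidef.eq_sqrt_of_sq_eq hsq (Matrix.posSemidef_conjTranspose_mul_self H) hsqeq
    have : traceNorm (πt - π) = ((Matrix.posSemidef_conjTranspose_mul_self H).sqrt).trace.re := rfl
    rw [this, ← heq, habs]
  have hkey : ∀ ρ : Matrix ι ι ℂ, (hρ : ρ.PosSemidef) → ‖(W * ρ).trace‖ ≤ ρ.trace.re := by
    intro ρ hρ
    have hgg : hρ.sqrt * hρ.sqrt = ρ := hρ.sqrt_mul_self
    have hgH := hρ.posSemidef_sqrt.isHermitian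
    have e1 : W * ρ = (W * hρ.sqrt) * hρ.sqrt := by rw [Matrix.mul_assoc, hgg]
    have hcs := cs_trace (W * hρ.sqrt) (hρ.sqrt)
    rw [← e1] at hcs
    have e2 : (W * hρ.sqrt)ᴴ * (W * hρ.sqrt) = ρ := by
      rw [isometry_conj hWWconj, hgH.eq, hgg]
    have e3 : hρ.sqrtᴴ * hρ.sqrt = ρ := by rw [hgH.eq, hgg]
    rw [e2, e3] at hcs
    calc ‖(W*ρ).trace‖ ≤ Real.sqrt (ρ.trace.re) * Real.sqrt (ρ.trace.re) := hcs
      _ = ρ.trace.re := Real.mul_self_sqrt (psd_trace_re_nonneg hρ)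
  rw [htn]
  by_cases hεhalf : ε ≤ 1/2
  case neg =>
    push_neg at hεhalf
    have h1 : ‖(W*πt).trace‖ ≤ 1 := by
      have := hkey πt hπtP
      rw [hπtr] at this
      simpa using this
    have h2 : ‖(W*π).trace‖ ≤ 1 := by
      have := hkey π hπpsd
      rw [hπtr1] at this
      simpa using this
    have h3 : ((W*H).trace).re ≤ 2 := by
      have hWHsplit : W * H = W * πt - W * π := by rw [hHdef, Matrix.mul_sub]
      rw [hWHsplit, Matrix.trace_sub, Complex.sub_re]
      have ha := Complex.abs_re_le_norm ((W*πt).trace)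
      have hb := Complex.abs_re_le_norm ((W*π).trace)
      have ha' := abs_le.mp (le_trans ha h1)
      have hb' := abs_le.mp (le_trans hb h2)
      linarith [ha'.1, ha'.2, hb'.1, hb'.2]
    have h4 : (2:ℝ) ≤ Real.sqrt (8*ε) := numeric_triv hεhalf
    linarith
  case pos =>
    set D := R - Ys with hDdef
    have hDH : D.IsHermitian := hRH.sub hYsH
    have hDpsd : D.PosSemidef :=
      sqrt_sub_sqrt_posSemidef hY (hY.add hΔ) (by simpa using hΔ)
    -- Powers–Størmer
    have hDirect : D * R + Ys * D = Δ := by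
      rw [hDdef, Matrix.sub_mul, Matrix.mul_sub, hRR, hYsYs]
      abel
    have htrPS : (D*R).trace + (Ys*D).trace = Δ.trace := by
      rw [← Matrix.trace_add, hDirect]
    have hDDtr : (D*D).trace = (D*R).trace - (D*Ys).trace := by
      nth_rewrite 2 [hDdef]
      rw [Matrix.mul_sub, Matrix.trace_sub]
    have hDYs0 : 0 ≤ (D*Ys).trace.re := trace_mul_psd_psd_re_nonneg hDpsd hYspsd
    have hYsD_eq : (Ys*D).trace = (D*Ys).trace := Matrix.trace_mul_comm _ _
    have hDD : (D*D).trace.re ≤ ε := by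
      have h1 := congrArg Complex.re htrPS
      have h2 := congrArg Complex.re hDDtr
      rw [Complex.add_re, hYsD_eq] at h1
      rw [Complex.sub_re] at h2
      rw [← hεdef] at h1
      linarith
    have hDADpsd : (D * Am * D).PosSemidef := psd_sandwich_herm hAmpsd hDH
    have hDAD0 : 0 ≤ (D * Am * D).trace.re := psd_trace_re_nonneg hDADpsd
    have hDADε : (D * Am * D).trace.re ≤ ε := by
      have h1 : 0 ≤ (D * ((1:Matrix ι ι ℂ) - Am) * D).trace.re :=
        psd_trace_re_nonneg (psd_sandwich_herm h1mAm hDH)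
      have h2 : D * ((1:Matrix ι ι ℂ) - Am) * D = D*D - D*Am*D := by
        noncomm_ring
      rw [h2, Matrix.trace_sub, Complex.sub_re] at h1
      linarith
    -- the three Cauchy–Schwarz bounds
    have hq1 : ‖(W * (D * Am * R)).trace‖ ≤ Real.sqrt ε := by
      have e1 : W * (D * Am * R) = (W * (D * G)) * (G * R) := by
        rw [← hGG]
        simp only [Matrix.mul_assoc]
      have hcs := cs_trace (W * (D * G)) (G * R)
      rw [← e1] at hcs
      have f1 : ((W * (D * G))ᴴ * (W * (D * G))).trace = (D * Am * D).trace := by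
        rw [isometry_conj hWWconj, herm_prod_trace hDH hGH, hGG]
      have f2 : ((G * R)ᴴ * (G * R)).trace = ((Y+Δ) * Am).trace := by
        rw [herm_prod_trace hGH hRH, hRR]
        calc (G*(Y+Δ)*G).trace = (G*G*(Y+Δ)).trace := Matrix.trace_mul_cycle _ _ _
          _ = (Am*(Y+Δ)).trace := by rw [hGG]
          _ = ((Y+Δ)*Am).trace := Matrix.trace_mul_comm _ _
      have hre2 : ((Y+Δ)*Am).trace.re = 1 := by rw [hSAm1]; simp
      rw [f1, f2, hre2, Real.sqrt_one, mul_one] at hcs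
      exact hcs.trans (Real.sqrt_le_sqrt hDADε)
    have hq2 : ‖(W * (Ys * Am * D)).trace‖ ≤ Real.sqrt ε := by
      have e1 : W * (Ys * Am * D) = (W * (Ys * G)) * (G * D) := by
        rw [← hGG]
        simp only [Matrix.mul_assoc]
      have hcs := cs_trace (W * (Ys * G)) (G * D)
      rw [← e1] at hcs
      have f1 : ((W * (Ys * G))ᴴ * (W * (Ys * G))).trace = (Y * Am).trace := by
        rw [isometry_conj hWWconj, herm_prod_trace hYsH hGH, hGG]
        calc (Ys*Am*Ys).trace = (Ys*Ys*Am).trace := Matrix.trace_mul_cycle _ _ _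
          _ = (Y*Am).trace := by rw [hYsYs]
      have f2 : ((G * D)ᴴ * (G * D)).trace = (D * Am * D).trace := by
        rw [herm_prod_trace hGH hDH]
        calc (G*(D*D)*G).trace = (G*G*(D*D)).trace := Matrix.trace_mul_cycle _ _ _
          _ = (Am*(D*D)).trace := by rw [hGG]
          _ = (D*D*Am).trace := Matrix.trace_mul_comm _ _
          _ = (D*Am*D).trace := (Matrix.trace_mul_cycle _ _ _).symm
      rw [f1, f2, ← hcrdef] at hcs
      have hb1 : Real.sqrt cr ≤ 1 := Real.sqrt_le_one.mpr hcr1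
      have hb2 : Real.sqrt ((D*Am*D).trace.re) ≤ Real.sqrt ε := Real.sqrt_le_sqrt hDADε
      calc ‖(W * (Ys * Am * D)).trace‖
          ≤ Real.sqrt cr * Real.sqrt ((D*Am*D).trace.re) := hcs
        _ ≤ 1 * Real.sqrt ε := by
            exact mul_le_mul hb1 hb2 (Real.sqrt_nonneg _) zero_le_one
        _ = Real.sqrt ε := one_mul _
    have hσre : (T*πt*Tᴴ).trace.re = cr := by rw [hσtr]; simp
    have hq3 : ‖(W * (T*πt*Tᴴ)).trace‖ ≤ cr := by
      have h := hkey _ hσpsd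
      rwa [hσre] at h
    -- decomposition of the trace
    have hdecomp : πt - T*πt*Tᴴ = D*Am*R + Ys*Am*D := by
      rw [hσ, ← hRAmR, hDdef]
      noncomm_ring
    have hsplit1 : (W*πt).trace = (W*(D*Am*R)).trace + (W*(Ys*Am*D)).trace
        + (W*(T*πt*Tᴴ)).trace := by
      have e1 : W*πt = W*(πt - T*πt*Tᴴ) + W*(T*πt*Tᴴ) := by
        rw [← Matrix.mul_add, sub_add_cancel]
      rw [e1, Matrix.trace_add, hdecomp, Matrix.mul_add, Matrix.trace_add]
    have hπterm : (W*π).trace = ((cr⁻¹:ℝ):ℂ) * (W*(T*πt*Tᴴ)).trace := by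
      rw [hπdef, mul_smul_comm, Matrix.trace_smul, smul_eq_mul]
    have hfinal_re : ((W*H).trace).re = ((W*(D*Am*R)).trace).re + ((W*(Ys*Am*D)).trace).re
        + (1 - cr⁻¹) * ((W*(T*πt*Tᴴ)).trace).re := by
      have e2 : W*H = W*πt - W*π := by rw [hHdef, Matrix.mul_sub]
      rw [e2, Matrix.trace_sub, Complex.sub_re, hsplit1, hπterm, Complex.add_re,
        Complex.add_re, Complex.re_ofReal_mul]
      ring
    rw [hfinal_re]
    have hA1 : ((W*(D*Am*R)).trace).re ≤ Real.sqrt ε :=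
      le_trans (Complex.re_le_norm _) hq1
    have hA2 : ((W*(Ys*Am*D)).trace).re ≤ Real.sqrt ε :=
      le_trans (Complex.re_le_norm _) hq2
    have hxlow : -cr ≤ ((W*(T*πt*Tᴴ)).trace).re := by
      have h := Complex.abs_re_le_norm ((W*(T*πt*Tᴴ)).trace)
      exact (abs_le.mp (le_trans h hq3)).1
    have hcrne : cr ≠ 0 := ne_of_gt hcr_pos
    have h0 : cr * cr⁻¹ = 1 := mul_inv_cancel₀ hcrne
    have hinv : 1 ≤ cr⁻¹ := one_le_inv_iff₀.mpr ⟨hcr_pos, hcr1⟩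
    have hterm3 : (1 - cr⁻¹) * ((W*(T*πt*Tᴴ)).trace).re ≤ 1 - cr := by
      have hc : (1 - cr⁻¹) ≤ 0 := by linarith
      have h5 : (1 - cr⁻¹) * ((W*(T*πt*Tᴴ)).trace).re ≤ (1 - cr⁻¹) * (-cr) :=
        mul_le_mul_of_nonpos_left hxlow hc
      have h6 : (1 - cr⁻¹) * (-cr) = 1 - cr := by
        field_simp
        ring
      linarith
    have h7 : 1 - cr ≤ ε := by linarith
    -- final numerics
    have hfin : 2 * Real.sqrt ε + ε ≤ Real.sqrt (8*ε) := numeric_main hε0 hεhalf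
    linarith
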